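/- Assume there exists a functor G from the category of graphs to abelian groups inducing natural isomorphisms ℤ^(Hom(X,Y)) ≅ Hom_ℤ(G(X), G(Y)) (the free abelian group on the hom-set), with all G(X) nonzero. If (X_α)_{α ∈ Ord} is a family of graphs such that Hom(X_α, X_β) ≠ ∅ iff α ≥ β, and C is the class of abelian groups generated by {G(X_α) : α ∈ Ord} (epimorphic images of direct sums of copies of these groups), then there is no abelian group M with C = Gen(M). -/

import Mathlib

universe u

/-- A graph: a type of vertices with a binary edge relation. -/
structure Graph' : Type (u + 1) where
  V : Type u
  E : V → V → Prop

/-- Graph homomorphisms: edge-preserving maps. -/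
def GraphHom (X Y : Graph'.{u}) : Type u :=
  { f : X.V → Y.V // ∀ a b, X.E a b → Y.E (f a) (f b) }

/-- `Gen M` for abelian groups: epimorphic images of direct sums of copies of `M`. -/
def GenClass (M N : AddCommGrpCat.{u}) : Prop :=
  ∃ (ι : Type u) (g : (DirectSum ι (fun _ : ι => ↥M)) →+ ↥N), Function.Surjective g

lemma freeAbelian_subsingleton {T : Type u} (h : IsEmpty T) :
    Subsingleton (FreeAbelianGroup T) := by
  have : Subsingleton (T →₀ ℤ) := inferInstance
  exact (FreeAbelianGroup.equivFinsupp T).injective.subsingleton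

theorem no_single_generator_of_ordinal_indexed_system
    (G : Graph'.{u} → AddCommGrpCat.{u})
    (Gmap : ∀ {X Y : Graph'.{u}}, GraphHom X Y → (↥(G X) →+ ↥(G Y)))
    -- the natural isomorphism `ℤ^(Hom(X,Y)) ≅ Hom_ℤ(G X, G Y)`
    (e : ∀ X Y : Graph'.{u}, FreeAbelianGroup (GraphHom X Y) ≃+ (↥(G X) →+ ↥(G Y)))
    (he : ∀ (X Y : Graph'.{u}) (f : GraphHom X Y), e X Y (FreeAbelianGroup.of f) = Gmap f)
    -- all the groups `G X` are nonzero
    (hGnz : ∀ X : Graph'.{u}, Nontrivial ↥(G X))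
    -- an `Ord`-indexed family of graphs with `Hom(X_α, X_β) ≠ ∅ ↔ α ≥ β`
    (X : Ordinal.{u} → Graph'.{u})
    (hX : ∀ α β : Ordinal.{u}, Nonempty (GraphHom (X α) (X β)) ↔ β ≤ α)
    -- `C` is the class of abelian groups generated by the groups `G (X α)`
    (C : AddCommGrpCat.{u} → Prop)
    (hC : ∀ N : AddCommGrpCat.{u}, C N ↔ ∃ (ι : Type u) (o : ι → Ordinal.{u})
      (g : (DirectSum ι (fun i => ↥(G (X (o i))))) →+ ↥N), Function.Surjective g) :
    ¬ ∃ M : AddCommGrpCat.{u}, ∀ N, C N ↔ GenClass M N := by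
  classical
  rintro ⟨M, hM⟩
  -- M ∈ Gen M, hence C M
  have hMgen : GenClass M M := by
    refine ⟨PUnit, DirectSum.toAddMonoid (fun _ => AddMonoidHom.id _), fun m => ?_⟩
    exact ⟨DirectSum.of _ PUnit.unit m, by simp [DirectSum.toAddMonoid_of]⟩
  obtain ⟨ι, o, g, hg⟩ := (hC M).mp ((hM M).mpr hMgen)
  -- choose α above all o i
  set α := Ordinal.lsub o with hα
  have hlt : ∀ i, o i < α := fun i => Ordinal.lt_lsub o i
  -- G (X α) ∈ C, hence ∈ Gen M
  have hCGXα : C (G (X α)) := by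
    refine (hC _).mpr ⟨PUnit, fun _ => α,
      DirectSum.toAddMonoid (fun _ => AddMonoidHom.id _), fun m => ?_⟩
    exact ⟨DirectSum.of _ PUnit.unit m, by simp [DirectSum.toAddMonoid_of]⟩
  obtain ⟨κ, h, hh⟩ := (hM _).mp hCGXα
  classical
  -- some component φ : M →+ G (X α) is nonzero
  have hκ : ∃ (k : κ) (m : ↥M), h (DirectSum.of _ k m) ≠ 0 := by
    by_contra hc
    push_neg at hc
    have hzero : h = 0 := by
      refine DirectSum.addHom_ext (fun k m => ?_)
      simp [hc k m]
    obtain ⟨x, y, hxy⟩ := hGnz (X α)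
    obtain ⟨a, ha⟩ := hh x
    obtain ⟨b, hb⟩ := hh y
    apply hxy
    rw [← ha, ← hb, hzero]; rfl
  obtain ⟨k, m, hm⟩ := hκ
  set φ : ↥M →+ ↥(G (X α)) := h.comp (DirectSum.of (fun _ : κ => ↥M) k) with hφ
  -- φ ∘ g is nonzero, so some component ψ : G (X (o i)) →+ G (X α) is nonzero
  obtain ⟨a, ha⟩ := hg m
  have hcomp : (φ.comp g) a ≠ 0 := by
    simpa [hφ, ha] using hm
  have hi : ∃ (i : ι) (x : ↥(G (X (o i)))),
      (φ.comp g) (DirectSum.of _ i x) ≠ 0 := by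
    by_contra hc
    push_neg at hc
    have : φ.comp g = 0 := by
      refine DirectSum.addHom_ext (fun i x => ?_)
      simp [hc i x]
    rw [this] at hcomp
    exact hcomp rfl
  obtain ⟨i, x, hx⟩ := hi
  set ψ : ↥(G (X (o i))) →+ ↥(G (X α)) :=
    (φ.comp g).comp (DirectSum.of (fun j => ↥(G (X (o j)))) i) with hψ
  have hψne : ψ ≠ 0 := fun hz => hx (by simpa [hψ] using DFunLike.congr_fun hz x)
  -- but Hom(X (o i), X α) is empty, so the hom group is trivial
  have hempty : IsEmpty (GraphHom (X (o i)) (X α)) := by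
    rw [← not_nonempty_iff]
    intro hne
    exact absurd ((hX _ _).mp hne) (not_le.mpr (hlt i))
  have hsub : Subsingleton (FreeAbelianGroup (GraphHom (X (o i)) (X α))) :=
    freeAbelian_subsingleton hempty
  apply hψne
  have : (e _ _).symm ψ = (e _ _).symm 0 := hsub.elim _ _
  simpa using congrArg (e (X (o i)) (X α)) this
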